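/- Let (A, m) be a local ring, E a nonzero A/m-vector space, and R = A ⋉ E the trivial ring extension. Then every element of R is either a zero divisor or a unit (R is a total ring of quotients), and hence R is a Prüfer ring. -/

import Mathlib

universe u v

def IsChainedRing (R : Type*) [CommRing R] : Prop :=
  ∀ I J : Ideal R, I ≤ J ∨ J ≤ I

def HasZeroDivisors (R : Type*) [CommRing R] : Prop :=
  ∃ a b : R, a ≠ 0 ∧ b ≠ 0 ∧ a * b = 0

def IsArithmetical (R : Type*) [CommRing R] : Prop :=
  ∀ (P : Ideal R) (hP : P.IsMaximal),
    letI := hP.isPrime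
    ∀ I J : Ideal (Localization.AtPrime P), I ≤ J ∨ J ≤ I

def FlatDimLE (R : Type u) [CommRing R] : ℕ → ModuleCat.{u} R → Prop
  | 0, M => Module.Flat R M
  | (n+1), M => ∃ (F : ModuleCat.{u} R) (f : F →ₗ[R] M), Function.Surjective f ∧
      Module.Flat R F ∧ FlatDimLE R n (ModuleCat.of R (LinearMap.ker f))

noncomputable def flatDim (R : Type u) [CommRing R] (M : ModuleCat.{u} R) : ℕ∞ :=
  sInf {n : ℕ∞ | ∃ k : ℕ, n = (k : ℕ∞) ∧ FlatDimLE R k M}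

def WgdimLE (R : Type u) [CommRing R] (n : ℕ) : Prop :=
  ∀ M : ModuleCat.{u} R, FlatDimLE R n M

def HasInfiniteWeakGlobalDimension (R : Type u) [CommRing R] : Prop :=
  ∀ n : ℕ, ∃ M : ModuleCat.{u} R, ¬ FlatDimLE R n M

def contentIdeal {R : Type*} [CommRing R] (f : Polynomial R) : Ideal R :=
  Ideal.span (Set.range f.coeff)

def IsGaussian (R : Type*) [CommRing R] : Prop :=
  ∀ f g : Polynomial R, contentIdeal (f * g) = contentIdeal f * contentIdeal g

def IsPruferRing (R : Type u) [CommRing R] : Prop :=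
  ∀ I : Ideal R, I.FG → (∃ x ∈ I, x ∈ nonZeroDivisors R) →
    IsUnit (I : FractionalIdeal (nonZeroDivisors R) (FractionRing R))

def IsQuasiProjective (R : Type u) [CommRing R] (M : Type v) [AddCommGroup M] [Module R M] : Prop :=
  ∀ (N : Submodule R M) (g : M →ₗ[R] M ⧸ N), ∃ h : M →ₗ[R] M, N.mkQ.comp h = g

theorem stmt_15 (A : Type u) [CommRing A] [IsLocalRing A] (E : Type u)
    [AddCommGroup E] [Module A E] [Module Aᵐᵒᵖ E] [IsCentralScalar A E]
    [Nontrivial E]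
    (hE : ∀ a ∈ IsLocalRing.maximalIdeal A, ∀ x : E, a • x = (0 : E)) :
    (∀ r : TrivSqZeroExt A E,
        IsUnit r ∨ ∃ s : TrivSqZeroExt A E, s ≠ 0 ∧ r * s = 0) ∧
      IsPruferRing (TrivSqZeroExt A E) := by
  have key : ∀ r : TrivSqZeroExt A E,
      IsUnit r ∨ ∃ s : TrivSqZeroExt A E, s ≠ 0 ∧ r * s = 0 := by
    intro r
    by_cases h : IsUnit r.fst
    · exact Or.inl (TrivSqZeroExt.isUnit_iff_isUnit_fst.2 h)
    · obtain ⟨y, hy⟩ := exists_ne (0 : E)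
      refine Or.inr ⟨TrivSqZeroExt.inr y, ?_, ?_⟩
      · exact fun h => hy (by simpa using congrArg TrivSqZeroExt.snd h)
      · have hm : r.fst ∈ IsLocalRing.maximalIdeal A := h
        have : r * TrivSqZeroExt.inr y = TrivSqZeroExt.inr (r.fst • y) := by
          ext <;> simp
        rw [this, hE _ hm, TrivSqZeroExt.inr_zero]
  refine ⟨key, ?_⟩
  intro I _ ⟨x, hxI, hx⟩
  have hxu : IsUnit x := by
    rcases key x with h | ⟨s, hs, hrs⟩
    · exact h
    · exact absurd (hx.2 s (by rwa [mul_comm])) hs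
  have hI : I = ⊤ := Ideal.eq_top_of_isUnit_mem I hxI hxu
  rw [hI]
  simp only [FractionalIdeal.coeIdeal_top]
  exact isUnit_one (M := FractionalIdeal (nonZeroDivisors (TrivSqZeroExt A E)) (FractionRing (TrivSqZeroExt A E)))
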